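/- Let n be even, let Θ_K ∈ ℝ^{n×n} be invertible and skew-symmetric, let N, M ∈ ℝ^{n×n} be invertible, and let A, B, C ∈ ℝ^{n×n} be fixed plant matrices. Let A_K, B_K1, B_K2, B_K3, C_K, X, Y, 𝐀, 𝐂 ∈ ℝ^{n×n} be related by the change of variables 𝐀 = N A_K Mᵀ + N B_K3 C X + Y B C_K Mᵀ + Y A X and 𝐂 = C_K Mᵀ, and define B̆_Ki = N B_Ki (i = 1,2,3) and N̆ = N Θ_K. Then the physical realizability constraints A_K Θ_K + Θ_K A_Kᵀ + Σ_{i=1}^{3} B_Ki·diag_{n/2}(J)·B_Kiᵀ = 0 and B_K1 = Θ_K C_Kᵀ diag_{n/2}(J) hold if and only if the transformed constraints hold: (−𝐀M⁻ᵀ + (B̆_K3 C + Y A)X M⁻ᵀ + Y B C_K) N̆ᵀ + N̆ (𝐀M⁻ᵀ − (B̆_K3 C + Y A)X M⁻ᵀ − Y B C_K)ᵀ + Σ_{i=1}^{3} B̆_Ki·diag_{n/2}(J)·B̆_Kiᵀ = 0 and B̆_K1 = N̆ C_Kᵀ diag_{n/2}(J). -/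

import Mathlib

noncomputable section
open Matrix

/-- The `n × n` block-diagonal matrix `diag(J, …, J)` with `n/2` copies of
`J = [[0,1],[-1,0]]` on the diagonal (for even `n`). -/
def Jblock (n : ℕ) : Matrix (Fin n) (Fin n) ℝ :=
  Matrix.of fun i j =>
    if i.val + 1 = j.val ∧ i.val % 2 = 0 then (1 : ℝ)
    else if j.val + 1 = i.val ∧ j.val % 2 = 0 then (-1 : ℝ) else 0

/-- Closed-loop `𝒜 = [[A, B C_K],[B_K3 C, A_K]]`. -/
def clA (n : ℕ) (A B C AK BK3 CK : Matrix (Fin n) (Fin n) ℝ) :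
    Matrix (Fin n ⊕ Fin n) (Fin n ⊕ Fin n) ℝ :=
  Matrix.fromBlocks A (B * CK) (BK3 * C) AK

/-- Closed-loop `ℬ = [[B_w, B, 0],[B_K3 D_w, B_K1, B_K2]]`. -/
def clB (n nw : ℕ) (B : Matrix (Fin n) (Fin n) ℝ) (Bw Dw : Matrix (Fin n) (Fin nw) ℝ)
    (BK1 BK2 BK3 : Matrix (Fin n) (Fin n) ℝ) :
    Matrix (Fin n ⊕ Fin n) (Fin nw ⊕ (Fin n ⊕ Fin n)) ℝ :=
  Matrix.fromBlocks Bw (Matrix.fromCols B 0) (BK3 * Dw) (Matrix.fromCols BK1 BK2)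

/-- Closed-loop `𝒞 = [C_z, D_z C_K]`. -/
def clC (n nz : ℕ) (Cz Dz : Matrix (Fin nz) (Fin n) ℝ)
    (CK : Matrix (Fin n) (Fin n) ℝ) : Matrix (Fin nz) (Fin n ⊕ Fin n) ℝ :=
  Matrix.fromCols Cz (Dz * CK)

/-- The physical realizability constraints with commutation matrix `Θ_K`. -/
def PhysReal (n : ℕ) (ΘK AK BK1 BK2 BK3 CK : Matrix (Fin n) (Fin n) ℝ) : Prop :=
  AK * ΘK + ΘK * AKᵀ
      + BK1 * Jblock n * BK1ᵀ + BK2 * Jblock n * BK2ᵀ + BK3 * Jblock n * BK3ᵀ = 0 ∧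
  BK1 = ΘK * CKᵀ * Jblock n

/-- equivalence of the physical realizability constraints and their
transformed version under the Scherer–Gahinet–Chilali change of variables. -/
theorem realizability_change_of_variables
    (n : ℕ) (hne : Even n)
    (ΘK : Matrix (Fin n) (Fin n) ℝ) (hΘ : IsUnit ΘK.det) (hskew : ΘKᵀ = -ΘK)
    (N M : Matrix (Fin n) (Fin n) ℝ) (hN : IsUnit N.det) (hM : IsUnit M.det)
    (A B C : Matrix (Fin n) (Fin n) ℝ)
    (AK BK1 BK2 BK3 CK X Y bA bC : Matrix (Fin n) (Fin n) ℝ)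
    (hX : Xᵀ = X) (hY : Yᵀ = Y)
    (hbA : bA = N * AK * Mᵀ + N * BK3 * C * X + Y * B * CK * Mᵀ + Y * A * X)
    (hbC : bC = CK * Mᵀ) :
    -- rescaled controller input matrices and rescaled commutation matrix
    let brB1 := N * BK1
    let brB2 := N * BK2
    let brB3 := N * BK3
    let brN := N * ΘK
    (PhysReal n ΘK AK BK1 BK2 BK3 CK ↔
      ((-(bA * (M⁻¹)ᵀ) + (brB3 * C + Y * A) * X * (M⁻¹)ᵀ + Y * B * CK) * brNᵀ
          + brN * (bA * (M⁻¹)ᵀ - (brB3 * C + Y * A) * X * (M⁻¹)ᵀ - Y * B * CK)ᵀ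
          + brB1 * Jblock n * brB1ᵀ + brB2 * Jblock n * brB2ᵀ + brB3 * Jblock n * brB3ᵀ = 0 ∧
        brB1 = brN * CKᵀ * Jblock n)) := by
  intro brB1 brB2 brB3 brN
  have hMT : Mᵀ * (M⁻¹)ᵀ = 1 := by
    rw [Matrix.transpose_nonsing_inv]
    exact Matrix.mul_nonsing_inv _ (by simpa using hM)
  haveI : Invertible N := Matrix.invertibleOfIsUnitDet N hN
  have e1 : brB1 = N * BK1 := rfl
  have e2 : brB2 = N * BK2 := rfl
  have e3 : brB3 = N * BK3 := rfl
  have e4 : brN = N * ΘK := rfl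
  have hE1 : (-(bA * (M⁻¹)ᵀ) + (brB3 * C + Y * A) * X * (M⁻¹)ᵀ + Y * B * CK)
      = -(N * AK) := by
    subst hbA
    rw [e3]
    simp only [Matrix.add_mul, Matrix.mul_assoc, hMT, Matrix.mul_one]
    try abel
  have hE2 : (bA * (M⁻¹)ᵀ - (brB3 * C + Y * A) * X * (M⁻¹)ᵀ - Y * B * CK)
      = N * AK := by
    subst hbA
    rw [e3]
    simp only [Matrix.add_mul, Matrix.mul_assoc, hMT, Matrix.mul_one]
    try abel
  rw [hE1, hE2, e1, e2, e3, e4]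
  have key : (-(N * AK)) * (N * ΘK)ᵀ + (N * ΘK) * (N * AK)ᵀ
      + (N * BK1) * Jblock n * (N * BK1)ᵀ + (N * BK2) * Jblock n * (N * BK2)ᵀ
      + (N * BK3) * Jblock n * (N * BK3)ᵀ
      = N * (AK * ΘK + ΘK * AKᵀ
          + BK1 * Jblock n * BK1ᵀ + BK2 * Jblock n * BK2ᵀ + BK3 * Jblock n * BK3ᵀ) * Nᵀ := by
    simp only [Matrix.transpose_mul, hskew, Matrix.mul_add, Matrix.add_mul,
      Matrix.mul_assoc, Matrix.mul_neg, Matrix.neg_mul, neg_neg]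
    try abel
  constructor
  · rintro ⟨h1, h2⟩
    refine ⟨by rw [key, h1, Matrix.mul_zero, Matrix.zero_mul], ?_⟩
    rw [h2]
    simp [Matrix.mul_assoc]
  · rintro ⟨h1, h2⟩
    rw [key] at h1
    constructor
    · have h1' : N * ((AK * ΘK + ΘK * AKᵀ + BK1 * Jblock n * BK1ᵀ
          + BK2 * Jblock n * BK2ᵀ + BK3 * Jblock n * BK3ᵀ) * Nᵀ) = N * 0 := by
        rw [← Matrix.mul_assoc, h1, Matrix.mul_zero]
      have h1'' := Matrix.mul_right_injective_of_invertible N h1'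
      haveI : Invertible Nᵀ := Matrix.invertibleOfIsUnitDet Nᵀ (by simpa using hN)
      have := Matrix.mul_left_injective_of_invertible (m := Fin n) Nᵀ
        (by simpa using h1'' : _ * Nᵀ = 0 * Nᵀ)
      simpa using this
    · apply Matrix.mul_right_injective_of_invertible N
      simpa [Matrix.mul_assoc] using h2
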